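/- Let g be a Lie algebra over ℝ or ℂ. The Nahm algebra A(g) is simple (i.e., A(g)·A(g) ≠ 0 and A(g) has no ideals other than 0 and itself) if and only if the Lie algebra g is simple. -/

import Mathlib

def nahmMul (𝕜 : Type*) [RCLike 𝕜] {L : Type*} [LieRing L] [LieAlgebra 𝕜 L]
    (X Y : Fin 3 → L) : Fin 3 → L :=
  fun i => (2 : 𝕜)⁻¹ • (⁅X (i + 1), Y (i + 2)⁆ + ⁅Y (i + 1), X (i + 2)⁆)

section Aux

variable {𝕜 : Type*} [RCLike 𝕜] {L : Type*} [LieRing L] [LieAlgebra 𝕜 L]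

lemma nahm1 (j : Fin 3) (x z : L) :
    nahmMul 𝕜 (Pi.single (j+1) x) (Pi.single j z) = Pi.single (j+2) ((2:𝕜)⁻¹ • ⁅z, x⁆) := by
  fin_cases j <;> funext i <;> fin_cases i <;> simp [nahmMul, Pi.single_apply]

lemma nahm2 (j : Fin 3) (x z : L) :
    nahmMul 𝕜 (Pi.single (j+2) x) (Pi.single j z) = Pi.single (j+1) ((2:𝕜)⁻¹ • ⁅x, z⁆) := by
  fin_cases j <;> funext i <;> fin_cases i <;> simp [nahmMul, Pi.single_apply]

lemma nahm3 (j : Fin 3) (x x' : L) (Y : Fin 3 → L) :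
    nahmMul 𝕜 (Pi.single (j+1) x') (nahmMul 𝕜 (Pi.single j x) Y) =
      Pi.single j ((2:𝕜)⁻¹ • ((2:𝕜)⁻¹ • ⁅x', ⁅x, Y (j+1)⁆⁆)) := by
  fin_cases j <;> funext i <;> fin_cases i <;>
    simp [nahmMul, Pi.single_apply, smul_add, lie_add]

end Aux

theorem nahm_simple_iff (𝕜 : Type*) [RCLike 𝕜] (L : Type*) [LieRing L] [LieAlgebra 𝕜 L] :
    ((∃ X Y : Fin 3 → L, nahmMul 𝕜 X Y ≠ 0) ∧
      ∀ J : Submodule 𝕜 (Fin 3 → L),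
        (∀ X : Fin 3 → L, ∀ Y ∈ J, nahmMul 𝕜 X Y ∈ J) → J = ⊥ ∨ J = ⊤) ↔
      LieAlgebra.IsSimple 𝕜 L := by
  have h2 : (2:𝕜)⁻¹ ≠ 0 := inv_ne_zero two_ne_zero
  constructor
  · rintro ⟨⟨X, Y, hXY⟩, hJ⟩
    constructor
    · intro I
      set Jm : Submodule 𝕜 (Fin 3 → L) :=
        Submodule.pi Set.univ (fun _ => (I : Submodule 𝕜 L)) with hJm
      have hmem : ∀ (Z : Fin 3 → L), Z ∈ Jm ↔ ∀ i, Z i ∈ I := by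
        intro Z
        simp [hJm, Submodule.mem_pi]
      have hcl : ∀ X : Fin 3 → L, ∀ Y ∈ Jm, nahmMul 𝕜 X Y ∈ Jm := by
        intro X Y hY
        rw [hmem] at hY ⊢
        intro i
        refine Submodule.smul_mem _ _ (add_mem (I.lie_mem (hY _)) ?_)
        rw [← lie_skew]
        exact neg_mem (I.lie_mem (hY _))
      rcases hJ Jm hcl with h | h
      · left
        rw [LieSubmodule.eq_bot_iff]
        intro m hm
        have : (fun _ => m : Fin 3 → L) ∈ Jm := (hmem _).mpr fun _ => hm
        rw [h, Submodule.mem_bot] at this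
        exact congrFun this 0
      · right
        rw [eq_top_iff]
        intro m _
        have : (fun _ => m : Fin 3 → L) ∈ Jm := h ▸ Submodule.mem_top
        exact (hmem _).mp this 0
    · intro habel
      apply hXY
      funext i
      simp [nahmMul, habel.trivial]
  · intro hs
    haveI := hs
    have hcenter : ∀ z : L, z ≠ 0 → ∃ x : L, ⁅x, z⁆ ≠ 0 := by
      intro z hz
      by_contra hc
      push_neg at hc
      have : z ∈ LieAlgebra.center 𝕜 L := (LieModule.mem_maxTrivSubmodule 𝕜 L L z).mpr hc
      rw [LieAlgebra.center_eq_bot, LieSubmodule.mem_bot] at this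
      exact hz this
    constructor
    · have hna : ¬ ∀ x y : L, ⁅x, y⁆ = 0 := fun h => hs.non_abelian ⟨h⟩
      push_neg at hna
      obtain ⟨x, y, hxy⟩ := hna
      refine ⟨Pi.single (0+1) y, Pi.single 0 x, ?_⟩
      rw [nahm1]
      intro h
      have := congrFun h (0+2)
      rw [Pi.single_eq_same] at this
      exact smul_ne_zero h2 hxy this
    · intro J hJ
      by_cases hbot : J = ⊥
      · exact Or.inl hbot
      right
      set I : Fin 3 → Submodule 𝕜 L :=
        fun j => J.comap (LinearMap.single 𝕜 (fun _ => L) j) with hI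
      have hImem : ∀ (j : Fin 3) (z : L), z ∈ I j ↔ Pi.single j z ∈ J := by
        intro j z
        simp [hI, Submodule.mem_comap, LinearMap.single_apply]
      have hIstep : ∀ (j : Fin 3) (z : L), z ∈ I j → ∀ x : L,
          ⁅x, z⁆ ∈ I (j+1) ∧ ⁅x, z⁆ ∈ I (j+2) := by
        intro j z hz x
        rw [hImem] at hz
        constructor
        · have := hJ (Pi.single (j+2) x) _ hz
          rw [nahm2] at this
          rw [← (I (j+1)).smul_mem_iff h2, hImem]
          exact this
        · have := hJ (Pi.single (j+1) x) _ hz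
          rw [nahm1] at this
          rw [← lie_skew, neg_mem_iff, ← (I (j+2)).smul_mem_iff h2, hImem]
          exact this
      have hIext : ∀ Y ∈ J, ∀ (j : Fin 3) (x x' : L), ⁅x', ⁅x, Y (j+1)⁆⁆ ∈ I j := by
        intro Y hY j x x'
        have := hJ (Pi.single (j+1) x') _ (hJ (Pi.single j x) _ hY)
        rw [nahm3] at this
        rw [← (I j).smul_mem_iff h2, ← (I j).smul_mem_iff h2, hImem]
        exact this
      have harith : ∀ a b : Fin 3, a = b ∨ a = b + 1 ∨ a = b + 2 := by decide
      have hadd : ∀ m : Fin 3, m + 2 + 1 = m := by decide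
      have e1 : ∀ m : Fin 3, m + 1 + 2 = m := by decide
      have e2 : ∀ m : Fin 3, m + 2 + 2 = m + 1 := by decide
      have e3 : ∀ m : Fin 3, m + 1 + 1 = m + 2 := by decide
      -- an element in all I m
      obtain ⟨Y, hY, hY0⟩ := J.ne_bot_iff.mp hbot
      obtain ⟨k, hk⟩ := Function.ne_iff.mp hY0
      obtain ⟨x, hx⟩ := hcenter _ hk
      obtain ⟨x', hx'⟩ := hcenter _ hx
      have hz₀ : ⁅x', ⁅x, Y k⁆⁆ ∈ I (k+2) := by
        have := hIext Y hY (k+2) x x'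
        rwa [hadd] at this
      set z₀ := ⁅x', ⁅x, Y k⁆⁆ with hz₀def
      obtain ⟨x₁, hx₁⟩ := hcenter z₀ hx'
      obtain ⟨x₂, hx₂⟩ := hcenter _ hx₁
      set u := ⁅x₂, ⁅x₁, z₀⁆⁆ with hu
      have huall : ∀ m : Fin 3, u ∈ I m := by
        have hw1 := (hIstep _ _ hz₀ x₁).1
        have hw2 := (hIstep _ _ hz₀ x₁).2
        intro m
        rcases harith m (k+2) with rfl | rfl | rfl
        · have := (hIstep _ _ hw1 x₂).2
          rwa [e1] at this
        · have := (hIstep _ _ hw2 x₂).2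
          rwa [e2] at this
        · have := (hIstep _ _ hw1 x₂).1
          rwa [e3] at this
      -- the Lie ideal
      let K : LieIdeal 𝕜 L :=
        { carrier := {z | ∀ m : Fin 3, z ∈ I m}
          add_mem' := fun ha hb m => (I m).add_mem (ha m) (hb m)
          zero_mem' := fun m => (I m).zero_mem
          smul_mem' := fun c z hz m => (I m).smul_mem c (hz m)
          lie_mem := by
            intro x z hz m
            have := (hIstep (m+2) z (hz (m+2)) x).1
            rwa [hadd] at this }
      have hKmem : ∀ z : L, z ∈ K ↔ ∀ m : Fin 3, z ∈ I m := fun z => Iff.rfl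
      have hKtop : K = ⊤ := by
        rcases hs.eq_bot_or_eq_top K with h | h
        · exfalso
          apply hx₂
          have : u ∈ K := (hKmem u).mpr huall
          rw [h, LieSubmodule.mem_bot] at this
          exact this
        · exact h
      rw [eq_top_iff]
      intro Z _
      have hsJ : ∀ (j : Fin 3) (z : L), Pi.single j z ∈ J := by
        intro j z
        have hzK : z ∈ K := hKtop ▸ LieSubmodule.mem_top z
        exact (hImem j z).mp ((hKmem z).mp hzK j)
      rw [← Finset.univ_sum_single Z]
      exact Submodule.sum_mem _ fun i _ => hsJ i (Z i)
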